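/- Let 𝔽 be ℝ or ℂ and let Λ be an index set. Let T : ℓ₁(Λ) → ℓ₁(Λ) be a bounded linear map, and let t_{αβ} denote the α-coordinate of T(e_β). Then T preserves parallel pairs (i.e., (Tx, Ty) is a parallel pair whenever (x, y) is a parallel pair) if and only if either for each α ∈ Λ there is at most one β ∈ Λ with t_{αβ} ≠ 0, or there exist u ∈ ℓ∞(Λ) and v ∈ ℓ₁(Λ) such that Tx = (Σ_{λ∈Λ} u_λ x_λ) · v for all x ∈ ℓ₁(Λ). -/

import Mathlib

open scoped ENNReal

/-- Two vectors in a normed space over `𝕜` form a *parallel pair* if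
`‖x + μ • y‖ = ‖x‖ + ‖y‖` for some scalar `μ` with `|μ| = 1`. -/
def ParallelPair (𝕜 : Type*) {E : Type*} [RCLike 𝕜] [NormedAddCommGroup E] [NormedSpace 𝕜 E]
    (x y : E) : Prop :=
  ∃ μ : 𝕜, ‖μ‖ = 1 ∧ ‖x + μ • y‖ = ‖x‖ + ‖y‖

namespace L1Par
variable {𝕜 : Type*} [RCLike 𝕜]

/-- A symmetric alignment relation: `‖a‖ • b = ‖b‖ • a`. -/
def Algn (a b : 𝕜) : Prop := (‖a‖ : 𝕜) * b = (‖b‖ : 𝕜) * a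

lemma algn_zero_right (a : 𝕜) : Algn a 0 := by simp [Algn]
lemma algn_zero_left (a : 𝕜) : Algn 0 a := by simp [Algn]

lemma algn_one_iff (b : 𝕜) : Algn 1 b ↔ b = (‖b‖ : 𝕜) := by
  simp [Algn, eq_comm]

lemma Algn.mul_right {a b : 𝕜} (h : Algn a b) (c : 𝕜) : Algn (a * c) (b * c) := by
  unfold Algn at *
  rw [norm_mul, norm_mul]
  push_cast
  calc (‖a‖:𝕜) * ‖c‖ * (b * c) = ((‖a‖:𝕜) * b) * ((‖c‖:𝕜) * c) := by ring
  _ = ((‖b‖:𝕜) * a) * ((‖c‖:𝕜) * c) := by rw [h]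
  _ = (‖b‖:𝕜) * ‖c‖ * (a * c) := by ring

lemma algn_mul_cancel {a b c : 𝕜} (hc : c ≠ 0) (h : Algn (a * c) (b * c)) : Algn a b := by
  unfold Algn at *
  rw [norm_mul, norm_mul] at h
  push_cast at h
  have hc' : (‖c‖ : 𝕜) ≠ 0 := by simpa using hc
  apply mul_left_cancel₀ hc'
  apply mul_right_cancel₀ hc
  calc (‖c‖:𝕜) * ((‖a‖:𝕜) * b) * c = (‖a‖:𝕜) * ‖c‖ * (b * c) := by ring
  _ = (‖b‖:𝕜) * ‖c‖ * (a * c) := h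
  _ = (‖c‖:𝕜) * ((‖b‖:𝕜) * a) * c := by ring

lemma algn_iff (a b : 𝕜) : ‖a + b‖ = ‖a‖ + ‖b‖ ↔ Algn a b := by
  constructor
  · intro h
    rcases eq_or_ne a 0 with rfl | ha
    · exact algn_zero_left b
    rcases eq_or_ne b 0 with rfl | hb
    · exact algn_zero_right a
    have h2 : ‖a + b‖ ^ 2 = (‖a‖ + ‖b‖) ^ 2 := by rw [h]
    set z := (starRingEnd 𝕜) a * b with hz
    have e1 : RCLike.re ((starRingEnd 𝕜) (a + b) * (a + b)) = ‖a + b‖ ^ 2 := by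
      rw [RCLike.conj_mul, ← RCLike.ofReal_pow, RCLike.ofReal_re]
    have e2 : (starRingEnd 𝕜) (a + b) * (a + b)
        = (starRingEnd 𝕜) a * a + ((starRingEnd 𝕜) b * b + (z + (starRingEnd 𝕜) z)) := by
      simp only [hz, map_add, map_mul, RCLike.conj_conj]
      ring
    have e3 : ‖a + b‖ ^ 2 = ‖a‖ ^ 2 + (‖b‖ ^ 2 + 2 * RCLike.re z) := by
      rw [← e1, e2]
      rw [map_add, map_add, map_add, RCLike.conj_mul, RCLike.conj_mul]
      rw [← RCLike.ofReal_pow, ← RCLike.ofReal_pow, RCLike.ofReal_re, RCLike.ofReal_re,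
        RCLike.conj_re]
      ring
    have hre : RCLike.re z = ‖a‖ * ‖b‖ := by nlinarith [e3, h2]
    have hnz : ‖z‖ = ‖a‖ * ‖b‖ := by
      rw [hz, norm_mul, RCLike.norm_conj]
    have hzeq : (RCLike.re z : 𝕜) = z := RCLike.re_eq_self_of_le (by rw [hnz, hre])
    have hz2 : z = ((‖a‖ * ‖b‖ : ℝ) : 𝕜) := by rw [← hzeq, hre]
    -- multiply by a
    have := congrArg (fun t => a * t) hz2
    simp only [hz, ← mul_assoc, RCLike.mul_conj] at this
    -- this : ‖a‖^2 * b = a * (‖a‖ * ‖b‖)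
    have hna : (‖a‖ : 𝕜) ≠ 0 := by simpa using ha
    unfold Algn
    apply mul_left_cancel₀ hna
    push_cast at this ⊢
    calc (‖a‖:𝕜) * ((‖a‖:𝕜) * b) = (‖a‖:𝕜)^2 * b := by ring
    _ = a * ((‖a‖:𝕜) * (‖b‖:𝕜)) := this
    _ = (‖a‖:𝕜) * ((‖b‖:𝕜) * a) := by ring
  · intro h
    rcases eq_or_ne a 0 with rfl | ha
    · simp
    have hna : (‖a‖ : 𝕜) ≠ 0 := by simpa using ha
    have hb : b = ((‖b‖ / ‖a‖ : ℝ) : 𝕜) * a := by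
      rw [RCLike.ofReal_div]
      rw [div_mul_eq_mul_div, eq_div_iff hna, mul_comm b]
      exact h
    rw [hb]
    have e : a + ((‖b‖ / ‖a‖ : ℝ) : 𝕜) * a = ((1 + ‖b‖ / ‖a‖ : ℝ) : 𝕜) * a := by push_cast; ring
    rw [e, norm_mul, norm_mul, RCLike.norm_ofReal, RCLike.norm_ofReal]
    have h1 : (0:ℝ) ≤ ‖b‖ / ‖a‖ := by positivity
    rw [abs_of_nonneg (by linarith), abs_of_nonneg h1]
    have hna' : ‖a‖ ≠ 0 := by simpa using ha
    field_simp

lemma algn_one_unimodular {μ : 𝕜} (h1 : Algn 1 μ) (h2 : ‖μ‖ = 1) : μ = 1 := by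
  rw [algn_one_iff] at h1
  rw [h1, h2]; norm_num

/-- from `Algn d μ` and `Algn (-d) μ` with `μ ≠ 0` conclude `d = 0`. -/
lemma algn_pm {d μ : 𝕜} (hμ : ‖μ‖ = 1) (h1 : Algn d μ) (h2 : Algn (-d) μ) : d = 0 := by
  unfold Algn at h1 h2
  rw [hμ] at h1 h2
  push_cast at h1 h2
  rw [norm_neg] at h2
  rw [one_mul] at h1 h2
  have : d = -d := by linear_combination h2 - h1
  have hdd : d + d = 0 := by rw [eq_neg_iff_add_eq_zero] at this; exact this
  exact add_self_eq_zero.mp hdd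


variable {Λ : Type*} [DecidableEq Λ]
set_option linter.unusedSectionVars false

local notation "ℓ1" => lp (fun _ : Λ => 𝕜) 1

lemma one_toReal_pos : (0:ℝ) < (1 : ℝ≥0∞).toReal := by norm_num

lemma hasSum_norm1 (x : ℓ1) : HasSum (fun l => ‖x l‖) ‖x‖ := by
  simpa using lp.hasSum_norm one_toReal_pos x

lemma summable_norm1 (x : ℓ1) : Summable (fun l => ‖x l‖) :=
  (hasSum_norm1 x).summable

lemma norm1_eq (x : ℓ1) : ‖x‖ = ∑' l, ‖x l‖ := (hasSum_norm1 x).tsum_eq.symm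

lemma single1_apply (i : Λ) (a : 𝕜) (j : Λ) :
    lp.single (E := fun _ : Λ => 𝕜) 1 i a j = if j = i then a else 0 := by
  rcases eq_or_ne j i with rfl | hj
  · simp [lp.single_apply_self]
  · simp [lp.single_apply_ne _ _ _ hj, hj]

lemma norm_single1 (i : Λ) (a : 𝕜) : ‖lp.single (E := fun _ : Λ => 𝕜) 1 i a‖ = ‖a‖ :=
  lp.norm_single (E := fun _ : Λ => 𝕜) (p := 1) (zero_lt_one : (0:ℝ≥0∞) < 1) i a

lemma parallelPair_iff (x y : ℓ1) :
    ParallelPair 𝕜 x y ↔ ∃ μ : 𝕜, ‖μ‖ = 1 ∧ ∀ l, Algn (x l) (μ * y l) := by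
  constructor
  · rintro ⟨μ, hμ, h⟩
    refine ⟨μ, hμ, fun l => ?_⟩
    rw [← algn_iff]
    by_contra hne
    have hle : ∀ m, ‖(x + μ • y) m‖ ≤ ‖x m‖ + ‖y m‖ := by
      intro m
      rw [lp.coeFn_add, lp.coeFn_smul]
      simp only [Pi.add_apply, Pi.smul_apply, smul_eq_mul]
      calc ‖x m + μ * y m‖ ≤ ‖x m‖ + ‖μ * y m‖ := norm_add_le _ _
      _ = ‖x m‖ + ‖y m‖ := by rw [norm_mul, hμ, one_mul]
    have hlt : ‖(x + μ • y) l‖ < ‖x l‖ + ‖y l‖ := by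
      rw [lp.coeFn_add, lp.coeFn_smul]
      simp only [Pi.add_apply, Pi.smul_apply, smul_eq_mul]
      rcases lt_or_eq_of_le (norm_add_le (x l) (μ * y l)) with hlt | heq
      · calc ‖x l + μ * y l‖ < ‖x l‖ + ‖μ * y l‖ := hlt
        _ = ‖x l‖ + ‖y l‖ := by rw [norm_mul, hμ, one_mul]
      · exact absurd (by rw [heq, norm_mul, hμ, one_mul]) hne
    have hsum : Summable (fun m => ‖x m‖ + ‖y m‖) :=
      (summable_norm1 x).add (summable_norm1 y)
    have : ‖x + μ • y‖ < ‖x‖ + ‖y‖ := by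
      rw [norm1_eq (x + μ • y), norm1_eq x, norm1_eq y, ← Summable.tsum_add
        (summable_norm1 x) (summable_norm1 y)]
      exact Summable.tsum_lt_tsum hle hlt ((hasSum_norm1 _).summable) hsum
    exact absurd h this.ne
  · rintro ⟨μ, hμ, h⟩
    refine ⟨μ, hμ, ?_⟩
    rw [norm1_eq (x + μ • y), norm1_eq x, norm1_eq y, ← Summable.tsum_add
      (summable_norm1 x) (summable_norm1 y)]
    congr 1
    funext m
    rw [lp.coeFn_add, lp.coeFn_smul]
    simp only [Pi.add_apply, Pi.smul_apply, smul_eq_mul]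
    rw [algn_iff _ _ |>.mpr (h m), norm_mul, hμ, one_mul]

/-- Coordinate evaluation as a continuous linear map on `ℓ¹`. -/
noncomputable def eval1 (α : Λ) : lp (fun _ : Λ => 𝕜) 1 →L[𝕜] 𝕜 :=
  LinearMap.mkContinuous
    { toFun := fun f => f α
      map_add' := fun f g => by simp only []; rw [lp.coeFn_add]; rfl
      map_smul' := fun c f => by simp only []; rw [lp.coeFn_smul]; rfl } 1
    (fun f => by
      simpa using lp.norm_apply_le_norm (by norm_num : (1:ℝ≥0∞) ≠ 0) f α)

@[simp] lemma eval1_apply (α : Λ) (f : ℓ1) : eval1 (𝕜 := 𝕜) α f = f α := rfl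

variable (T : lp (fun _ : Λ => 𝕜) 1 →L[𝕜] lp (fun _ : Λ => 𝕜) 1)

lemma hasSum_single1 (x : ℓ1) :
    HasSum (fun β : Λ => lp.single 1 β (x β)) x :=
  lp.hasSum_single (by norm_num) x

lemma hasSum_T_apply (x : ℓ1) (α : Λ) :
    HasSum (fun β : Λ => x β * (T (lp.single 1 β (1:𝕜)) α)) (T x α) := by
  have h1 := (hasSum_single1 x).mapL ((eval1 α).comp T)
  have : ∀ β : Λ, ((eval1 α).comp T) (lp.single 1 β (x β))
      = x β * (T (lp.single 1 β (1:𝕜)) α) := by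
    intro β
    have : lp.single (E := fun _ : Λ => 𝕜) 1 β (x β) = x β • lp.single 1 β (1:𝕜) := by
      rw [← lp.single_smul]
      congr 1
      simp
    rw [ContinuousLinearMap.comp_apply, this, map_smul]
    simp [smul_eq_mul]
  rw [funext this] at h1
  simpa using h1

lemma preserves_of_rowwise
    (hi : ∀ α β β' : Λ, T (lp.single 1 β (1:𝕜)) α ≠ 0 → T (lp.single 1 β' (1:𝕜)) α ≠ 0 → β = β')
    (x y : ℓ1) (hxy : ParallelPair 𝕜 x y) : ParallelPair 𝕜 (T x) (T y) := by
  rw [parallelPair_iff] at hxy ⊢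
  obtain ⟨μ, hμ, hal⟩ := hxy
  refine ⟨μ, hμ, fun α => ?_⟩
  by_cases h0 : ∃ β₀ : Λ, T (lp.single 1 β₀ (1:𝕜)) α ≠ 0
  · obtain ⟨β₀, hβ₀⟩ := h0
    have hz : ∀ z : ℓ1, T z α = z β₀ * (T (lp.single 1 β₀ (1:𝕜)) α) := by
      intro z
      have h1 : HasSum (fun β : Λ => z β * (T (lp.single 1 β (1:𝕜)) α))
          (z β₀ * (T (lp.single 1 β₀ (1:𝕜)) α)) := by
        have := hasSum_single (f := fun β : Λ => z β * (T (lp.single 1 β (1:𝕜)) α)) β₀ ?_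
        · exact this
        · intro β hβ
          have h2 : T (lp.single 1 β (1:𝕜)) α = 0 := by
            by_contra hne
            exact hβ (hi α β β₀ hne hβ₀)
          simp only [h2, mul_zero]
      exact (hasSum_T_apply T z α).unique h1
    rw [hz x, hz y]
    have h3 := (hal β₀).mul_right (T (lp.single 1 β₀ (1:𝕜)) α)
    rw [mul_assoc] at h3
    exact h3
  · push_neg at h0
    have hz : ∀ z : ℓ1, T z α = 0 := by
      intro z
      have h1 : HasSum (fun β : Λ => z β * (T (lp.single 1 β (1:𝕜)) α)) 0 := by
        convert hasSum_zero with β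
        rw [h0 β, mul_zero]
      exact (hasSum_T_apply T z α).unique h1
    rw [hz x, hz y, mul_zero]
    exact algn_zero_left 0

lemma preserves_of_rank1 (u : lp (fun _ : Λ => 𝕜) ∞) (v : ℓ1)
    (huv : ∀ x : ℓ1, T x = (∑' l, u l * x l) • v)
    (x y : ℓ1) : ParallelPair 𝕜 (T x) (T y) := by
  set a := ∑' l, u l * (x l : 𝕜) with hadef
  set b := ∑' l, u l * (y l : 𝕜) with hbdef
  have hax : T x = a • v := huv x
  have hby : T y = b • v := huv y
  by_cases hb : b = 0
  · refine ⟨1, by simp, ?_⟩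
    rw [hax, hby, hb, zero_smul, smul_zero, add_zero, norm_zero, add_zero]
  by_cases ha : a = 0
  · refine ⟨1, by simp, ?_⟩
    rw [hax, hby, ha, zero_smul, one_smul, zero_add, norm_zero, zero_add]
  · have hna : (‖a‖:𝕜) ≠ 0 := by simpa using ha
    have hnb : (‖b‖:𝕜) ≠ 0 := by simpa using hb
    refine ⟨(a * (‖b‖:𝕜)) / ((‖a‖:𝕜) * b), ?_, ?_⟩
    · rw [norm_div, norm_mul, norm_mul, RCLike.norm_ofReal, RCLike.norm_ofReal,
        abs_of_nonneg (norm_nonneg a), abs_of_nonneg (norm_nonneg b)]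
      rw [mul_comm ‖a‖ ‖b‖]
      apply div_self
      have h1 : 0 < ‖a‖ := norm_pos_iff.mpr ha
      have h2 : 0 < ‖b‖ := norm_pos_iff.mpr hb
      positivity
    · rw [hax, hby, smul_smul, ← add_smul, norm_smul, norm_smul, norm_smul]
      have key : a + (a * (‖b‖:𝕜)) / ((‖a‖:𝕜) * b) * b = (((‖a‖ + ‖b‖) / ‖a‖ : ℝ) : 𝕜) * a := by
        push_cast
        field_simp
      rw [key, norm_mul, RCLike.norm_ofReal, abs_of_nonneg (by positivity)]
      have hna' : ‖a‖ ≠ 0 := by simpa using ha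
      field_simp


lemma algn_neg_self {a : 𝕜} (h : Algn (-a) a) : a = 0 := by
  unfold Algn at h
  rw [norm_neg] at h
  have h2 : (‖a‖:𝕜) * (a + a) = 0 := by ring_nf; linear_combination h
  rcases mul_eq_zero.mp h2 with h3 | h3
  · have : ‖a‖ = 0 := by exact_mod_cast h3
    exact norm_eq_zero.mp this
  · exact add_self_eq_zero.mp h3

/-- sign of `t`: a unimodular `μ` with `‖t‖ μ = t`. -/
lemma exists_sgn (t : 𝕜) : ∃ μ : 𝕜, ‖μ‖ = 1 ∧ (‖t‖:𝕜) * μ = t := by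
  rcases eq_or_ne t 0 with rfl | ht
  · exact ⟨1, by simp, by simp⟩
  · have hn : (‖t‖:𝕜) ≠ 0 := by simpa using ht
    refine ⟨t / (‖t‖:𝕜), ?_, by field_simp⟩
    rw [norm_div, RCLike.norm_ofReal, abs_of_nonneg (norm_nonneg t)]
    exact div_self (norm_ne_zero_iff.mpr ht)

/-- inverse sign of `t`: a unimodular `μ` with `μ t = ‖t‖`. -/
lemma exists_sgn' (t : 𝕜) : ∃ μ : 𝕜, ‖μ‖ = 1 ∧ μ * t = (‖t‖:𝕜) := by
  rcases eq_or_ne t 0 with rfl | ht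
  · exact ⟨1, by simp, by simp⟩
  · have hn : (‖t‖:𝕜) ≠ 0 := by simpa using ht
    refine ⟨(‖t‖:𝕜) / t, ?_, by field_simp⟩
    rw [norm_div, RCLike.norm_ofReal, abs_of_nonneg (norm_nonneg t)]
    exact div_self (norm_ne_zero_iff.mpr ht)

lemma algn_self_one (a : 𝕜) : Algn a ((1:𝕜) * a) := by
  rw [one_mul]; unfold Algn; rfl

/-- Key lemma: two columns sharing a support point are proportional. -/
lemma column_prop
    (hT : ∀ x y : ℓ1, ParallelPair 𝕜 x y → ParallelPair 𝕜 (T x) (T y))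
    {β β' α : Λ} (hββ : β ≠ β')
    (hβ : T (lp.single 1 β (1:𝕜)) α ≠ 0) (hβ' : T (lp.single 1 β' (1:𝕜)) α ≠ 0) :
    ∃ z : 𝕜, z ≠ 0 ∧ T (lp.single 1 β (1:𝕜)) = z • T (lp.single 1 β' (1:𝕜)) := by
  set v := T (lp.single 1 β (1:𝕜)) with hv
  set w := T (lp.single 1 β' (1:𝕜)) with hw
  -- the two parallel-pair families
  have hdomA : ∀ t : 𝕜, ParallelPair 𝕜
      ((lp.single (E := fun _ : Λ => 𝕜) 1 β (1:𝕜)) + t • (lp.single 1 β' (1:𝕜)))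
      (lp.single 1 β' (1:𝕜)) := by
    intro t
    obtain ⟨μ, hμ, hμt⟩ := exists_sgn t
    rw [parallelPair_iff]
    refine ⟨μ, hμ, fun l => ?_⟩
    rw [lp.coeFn_add, lp.coeFn_smul]
    simp only [Pi.add_apply, Pi.smul_apply, smul_eq_mul, single1_apply]
    rcases eq_or_ne l β with rfl | hlβ
    · rw [if_pos rfl, if_neg hββ, mul_zero, add_zero, mul_zero]
      exact algn_zero_right 1
    · rw [if_neg hlβ]
      rcases eq_or_ne l β' with rfl | hlβ'
      · rw [if_pos rfl, mul_one, mul_one, zero_add]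
        unfold Algn
        rw [hμ]
        push_cast
        rw [one_mul, hμt]
      · rw [if_neg hlβ', mul_zero, add_zero, mul_zero]
        exact algn_zero_left 0
  have hdomB : ∀ t : 𝕜, ParallelPair 𝕜
      ((lp.single (E := fun _ : Λ => 𝕜) 1 β (1:𝕜)) + t • (lp.single 1 β' (1:𝕜)))
      (lp.single 1 β (1:𝕜)) := by
    intro t
    rw [parallelPair_iff]
    refine ⟨1, by simp, fun l => ?_⟩
    rw [lp.coeFn_add, lp.coeFn_smul]
    simp only [Pi.add_apply, Pi.smul_apply, smul_eq_mul, single1_apply]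
    rcases eq_or_ne l β with rfl | hlβ
    · rw [if_pos rfl, if_neg hββ, mul_zero, add_zero]
      exact algn_self_one 1
    · rw [if_neg hlβ, mul_zero, zero_add]
      rcases eq_or_ne l β' with rfl | hlβ'
      · rw [if_pos rfl, mul_one]
        exact algn_zero_right t
      · rw [if_neg hlβ', mul_zero]
        exact algn_zero_left 0
  have himg : ∀ t : 𝕜, T ((lp.single 1 β (1:𝕜)) + t • (lp.single 1 β' (1:𝕜))) = v + t • w := by
    intro t
    rw [map_add, map_smul]
  have hA : ∀ t : 𝕜, ∃ μ : 𝕜, ‖μ‖ = 1 ∧ ∀ l, Algn ((v + t • w) l) (μ * w l) := by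
    intro t
    have := hT _ _ (hdomA t)
    rw [himg t] at this
    rw [parallelPair_iff] at this
    exact this
  have hB : ∀ t : 𝕜, ∃ μ : 𝕜, ‖μ‖ = 1 ∧ ∀ l, Algn ((v + t • w) l) (μ * v l) := by
    intro t
    have := hT _ _ (hdomB t)
    rw [himg t] at this
    rw [parallelPair_iff] at this
    exact this
  -- coordinates of v + t • w
  have hcoord : ∀ (t : 𝕜) (l : Λ), (v + t • w) l = v l + t * w l := by
    intro t l
    rw [lp.coeFn_add, lp.coeFn_smul]
    simp
  -- step (a): cross-ratio equality on the support of w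
  have hcross : ∀ l : Λ, w l ≠ 0 → v l * w α = v α * w l := by
    intro l hwl
    rcases eq_or_ne l α with rfl | hlα
    · ring
    set z₁ : 𝕜 := v α / w α with hz₁
    set z₂ : 𝕜 := v l / w l with hz₂
    set t : 𝕜 := -(z₁ + z₂) / 2 with ht
    set d : 𝕜 := (z₁ - z₂) / 2 with hd
    obtain ⟨μ, hμ, halgn⟩ := hA t
    have e₁ : (v + t • w) α = d * w α := by
      rw [hcoord]
      have h1 : z₁ * w α = v α := by rw [hz₁]; exact div_mul_cancel₀ _ hβ'
      rw [ht, hd]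
      linear_combination (-1 : 𝕜) * h1
    have e₂ : (v + t • w) l = -d * w l := by
      rw [hcoord]
      have h1 : z₂ * w l = v l := by rw [hz₂]; exact div_mul_cancel₀ _ hwl
      rw [ht, hd]
      linear_combination (-1 : 𝕜) * h1
    have a₁ : Algn d μ := by
      have h := halgn α
      rw [e₁] at h
      exact algn_mul_cancel hβ' h
    have a₂ : Algn (-d) μ := by
      have h := halgn l
      rw [e₂] at h
      exact algn_mul_cancel hwl h
    have hd0 : d = 0 := algn_pm hμ a₁ a₂
    have hzz : z₁ = z₂ := by
      have h2 : z₁ - z₂ = 2 * d := by rw [hd]; ring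
      rw [hd0, mul_zero] at h2
      exact sub_eq_zero.mp h2
    rw [hz₁, hz₂] at hzz
    exact ((div_eq_div_iff hβ' hwl).mp hzz).symm
  -- step (b): v vanishes off the support of w
  have hoff : ∀ l : Λ, w l = 0 → v l = 0 := by
    intro l₁ hwl₁
    by_contra hvl₁
    set t : 𝕜 := -2 * (v α / w α) with ht
    obtain ⟨μ, hμ, halgn⟩ := hB t
    have hμ1 : μ = 1 := by
      have := halgn l₁
      rw [hcoord, hwl₁, mul_zero, add_zero] at this
      have h2 : Algn ((1:𝕜) * v l₁) (μ * v l₁) := by rwa [one_mul]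
      exact algn_one_unimodular (algn_mul_cancel hvl₁ h2) hμ
    have := halgn α
    rw [hcoord, hμ1, one_mul] at this
    have hvα : v α + t * w α = -(v α) := by
      rw [ht]
      field_simp
      ring
    rw [hvα] at this
    exact hβ (algn_neg_self this)
  refine ⟨v α / w α, div_ne_zero hβ hβ', ?_⟩
  apply lp.ext
  funext l
  rw [lp.coeFn_smul]
  simp only [Pi.smul_apply, smul_eq_mul]
  rcases eq_or_ne (w l) 0 with hwl | hwl
  · rw [hoff l hwl, hwl, mul_zero]
  · rw [div_mul_eq_mul_div, eq_div_iff hβ']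
    linear_combination hcross l hwl


lemma disjoint_contra
    (hT : ∀ x y : ℓ1, ParallelPair 𝕜 x y → ParallelPair 𝕜 (T x) (T y))
    {β₁ β₂ γ α₀ : Λ} (h12 : β₁ ≠ β₂) (h1γ : γ ≠ β₁) (h2γ : γ ≠ β₂)
    {z : 𝕜} (hz : z ≠ 0)
    (hw : T (lp.single 1 β₂ (1:𝕜)) = z • T (lp.single 1 β₁ (1:𝕜)))
    (hvα : T (lp.single 1 β₁ (1:𝕜)) α₀ ≠ 0)
    (hγ0 : T (lp.single 1 γ (1:𝕜)) ≠ 0)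
    (hdisj : ∀ l, T (lp.single 1 β₁ (1:𝕜)) l ≠ 0 → T (lp.single 1 γ (1:𝕜)) l = 0) :
    False := by
  set v := T (lp.single 1 β₁ (1:𝕜)) with hvdef
  set c := T (lp.single 1 γ (1:𝕜)) with hcdef
  have hl₁ : ∃ l₁, c l₁ ≠ 0 := by
    by_contra h
    push_neg at h
    apply hγ0
    apply lp.ext
    funext l
    rw [lp.coeFn_zero]
    exact h l
  obtain ⟨l₁, hcl₁⟩ := hl₁
  have hvl₁ : v l₁ = 0 := by
    by_contra h
    exact hcl₁ (hdisj l₁ h)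
  have hcα₀ : c α₀ = 0 := hdisj α₀ hvα
  have hdom : ∀ t : 𝕜, ParallelPair 𝕜
      ((lp.single (E := fun _ : Λ => 𝕜) 1 β₁ (1:𝕜)) + (lp.single 1 γ (1:𝕜)))
      ((lp.single (E := fun _ : Λ => 𝕜) 1 β₂ (1:𝕜)) + t • (lp.single 1 γ (1:𝕜))) := by
    intro t
    obtain ⟨μ, hμ, hμt⟩ := exists_sgn' t
    rw [parallelPair_iff]
    refine ⟨μ, hμ, fun l => ?_⟩
    rw [lp.coeFn_add, lp.coeFn_add, lp.coeFn_smul]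
    simp only [Pi.add_apply, Pi.smul_apply, smul_eq_mul, single1_apply]
    rcases eq_or_ne l γ with rfl | hlγ
    · rw [if_pos rfl, if_neg h1γ, if_neg h2γ, zero_add, zero_add, mul_one]
      rw [algn_one_iff, hμt]
      rw [RCLike.norm_ofReal, abs_of_nonneg (norm_nonneg t)]
    · rw [if_neg hlγ, mul_zero, add_zero, add_zero]
      rcases eq_or_ne l β₂ with rfl | hlβ₂
      · rw [if_pos rfl, if_neg (Ne.symm h12), mul_one]
        exact algn_zero_left μ
      · rw [if_neg hlβ₂, mul_zero]
        exact algn_zero_right _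
  have himg : ∀ t : 𝕜, ∃ μ : 𝕜, ‖μ‖ = 1 ∧
      ∀ l, Algn ((v l + c l)) (μ * (z * v l + t * c l)) := by
    intro t
    have h := hT _ _ (hdom t)
    rw [map_add, map_add, map_smul, ← hvdef, ← hcdef, hw] at h
    rw [parallelPair_iff] at h
    obtain ⟨μ, hμ, halgn⟩ := h
    refine ⟨μ, hμ, fun l => ?_⟩
    have h2 := halgn l
    rw [lp.coeFn_add, lp.coeFn_add, lp.coeFn_smul, lp.coeFn_smul] at h2
    simpa using h2
  obtain ⟨μ, hμ, halgn⟩ := himg (-z)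
  have e₁ : μ * z = ((‖z‖ : ℝ) : 𝕜) := by
    have h := halgn α₀
    rw [hcα₀, mul_zero, add_zero, add_zero, ← mul_assoc] at h
    have h2 : Algn ((1:𝕜) * v α₀) ((μ * z) * v α₀) := by rwa [one_mul]
    have h3 := algn_mul_cancel hvα h2
    rw [algn_one_iff] at h3
    rw [h3, norm_mul, hμ, one_mul]
  have e₂ : μ * (-z) = ((‖z‖ : ℝ) : 𝕜) := by
    have h := halgn l₁
    rw [hvl₁, mul_zero, zero_add, zero_add, ← mul_assoc] at h
    have h2 : Algn ((1:𝕜) * c l₁) ((μ * (-z)) * c l₁) := by rwa [one_mul]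
    have h3 := algn_mul_cancel hcl₁ h2
    rw [algn_one_iff] at h3
    rw [h3, norm_mul, hμ, one_mul, norm_neg]
  have hz0 : ‖z‖ = 0 := by
    have h5 : ((‖z‖ : ℝ) : 𝕜) * 2 = 0 := by linear_combination -e₁ - e₂
    rcases mul_eq_zero.mp h5 with h6 | h6
    · exact_mod_cast h6
    · exact absurd h6 two_ne_zero
  exact hz (norm_eq_zero.mp hz0)

lemma rank_one_of_not_rowwise
    (hT : ∀ x y : ℓ1, ParallelPair 𝕜 x y → ParallelPair 𝕜 (T x) (T y))
    {α₀ β₁ β₂ : Λ} (h12 : β₁ ≠ β₂)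
    (h1 : T (lp.single 1 β₁ (1:𝕜)) α₀ ≠ 0) (h2 : T (lp.single 1 β₂ (1:𝕜)) α₀ ≠ 0) :
    ∃ (u : lp (fun _ : Λ => 𝕜) ∞) (v : lp (fun _ : Λ => 𝕜) 1),
      ∀ x : lp (fun _ : Λ => 𝕜) 1, T x = (∑' l : Λ, u l * x l) • v := by
  set v := T (lp.single 1 β₁ (1:𝕜)) with hvdef
  have hv0 : v ≠ 0 := by
    intro h
    rw [h] at h1
    rw [lp.coeFn_zero] at h1
    exact h1 rfl
  have hcol : ∀ γ : Λ, ∃ zγ : 𝕜, T (lp.single 1 γ (1:𝕜)) = zγ • v := by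
    intro γ
    rcases eq_or_ne γ β₁ with rfl | hγ1
    · exact ⟨1, (one_smul _ _).symm⟩
    by_cases hγ0 : T (lp.single 1 γ (1:𝕜)) = 0
    · exact ⟨0, by rw [hγ0, zero_smul]⟩
    by_cases hshare : ∃ α, T (lp.single 1 γ (1:𝕜)) α ≠ 0 ∧ v α ≠ 0
    · obtain ⟨α, hγα, hvα⟩ := hshare
      obtain ⟨z, hz, hzeq⟩ := column_prop T hT hγ1 hγα hvα
      exact ⟨z, hzeq⟩
    · exfalso
      push_neg at hshare
      have hdisj : ∀ l, v l ≠ 0 → T (lp.single 1 γ (1:𝕜)) l = 0 := by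
        intro l hvl
        by_contra h
        exact hvl (hshare l h)
      have hγ2 : γ ≠ β₂ := by
        rintro rfl
        exact h2 (hdisj α₀ h1)
      obtain ⟨z, hz, hw⟩ := column_prop T hT h12.symm h2 h1
      exact disjoint_contra T hT h12 hγ1 hγ2 hz hw h1 hγ0 hdisj
  choose u hu using hcol
  have hvn : 0 < ‖v‖ := norm_pos_iff.mpr hv0
  have hbound : ∀ γ : Λ, ‖u γ‖ ≤ ‖T‖ / ‖v‖ := by
    intro γ
    rw [le_div_iff₀ hvn, ← norm_smul, ← hu γ]
    calc ‖T (lp.single 1 γ (1:𝕜))‖ ≤ ‖T‖ * ‖lp.single (E := fun _ : Λ => 𝕜) 1 γ (1:𝕜)‖ :=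
      T.le_opNorm _
    _ = ‖T‖ := by rw [norm_single1, norm_one, mul_one]
  have humem : Memℓp u ∞ := memℓp_infty ⟨‖T‖ / ‖v‖, by
    rintro r ⟨γ, rfl⟩
    exact hbound γ⟩
  refine ⟨⟨u, humem⟩, v, fun x => ?_⟩
  have hsummable : Summable (fun β : Λ => u β * x β) := by
    apply Summable.of_norm_bounded (g := fun β => (‖T‖ / ‖v‖) * ‖x β‖)
      ((summable_norm1 x).mul_left _)
    intro β
    rw [norm_mul]
    exact mul_le_mul_of_nonneg_right (hbound β) (norm_nonneg _)
  have h3 : ∀ β : Λ, T (lp.single 1 β (x β)) = (u β * x β) • v := by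
    intro β
    have hsx : lp.single (E := fun _ : Λ => 𝕜) 1 β (x β) = x β • lp.single 1 β (1:𝕜) := by
      rw [← lp.single_smul]
      congr 1
      simp
    rw [hsx, map_smul, hu β, smul_smul, mul_comm]
  have h2' : HasSum (fun β : Λ => (u β * x β) • v) (T x) := by
    have := (hasSum_single1 x).mapL T
    rw [funext h3] at this
    exact this
  have h4 : HasSum (fun β : Λ => (u β * x β) • v) ((∑' l : Λ, u l * x l) • v) :=
    hsummable.hasSum.smul_const v
  exact h2'.unique h4


end L1Par


/-- A bounded linear map `T` of `ℓ₁(Λ)` (`𝔽 = ℝ` or `ℂ`), with matrix entries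
`t_{αβ} = (T e_β)_α`, preserves parallel pairs if and only if either for each `α` there
is at most one `β` with `t_{αβ} ≠ 0`, or `T = v uᵗ` for some `u ∈ ℓ∞(Λ)` and
`v ∈ ℓ₁(Λ)`, i.e. `Tx = (∑_λ u_λ x_λ) • v`. -/
theorem l1_inf_parallel_preserver_iff {𝕜 : Type*} [RCLike 𝕜] {Λ : Type*} [DecidableEq Λ]
    (T : lp (fun _ : Λ => 𝕜) 1 →L[𝕜] lp (fun _ : Λ => 𝕜) 1) :
    (∀ x y : lp (fun _ : Λ => 𝕜) 1,
        ParallelPair 𝕜 x y → ParallelPair 𝕜 (T x) (T y)) ↔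
      ((∀ α β β' : Λ,
          T (lp.single 1 β (1 : 𝕜)) α ≠ 0 → T (lp.single 1 β' (1 : 𝕜)) α ≠ 0 → β = β') ∨
        ∃ (u : lp (fun _ : Λ => 𝕜) ∞) (v : lp (fun _ : Λ => 𝕜) 1),
          ∀ x : lp (fun _ : Λ => 𝕜) 1, T x = (∑' l : Λ, u l * x l) • v) := by
  constructor
  · intro hT
    by_cases hi : ∀ α β β' : Λ,
        T (lp.single 1 β (1 : 𝕜)) α ≠ 0 → T (lp.single 1 β' (1 : 𝕜)) α ≠ 0 → β = β'
    · exact Or.inl hi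
    · right
      push_neg at hi
      obtain ⟨α₀, β₁, β₂, h1, h2, h12⟩ := hi
      exact L1Par.rank_one_of_not_rowwise T hT h12 h1 h2
  · rintro (hi | ⟨u, v, huv⟩) x y hxy
    · exact L1Par.preserves_of_rowwise T hi x y hxy
    · exact L1Par.preserves_of_rank1 T u v huv x y
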